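/- There exists a universal constant C > 0 such that for all α > 0, all a ≥ 0, and all 0 ≤ r ≤ min{1, 1/(2α)}, setting p(t) := 1 + e^{−2αt}, one has ∫₀^r t^{−(1−1/p(t))} · a^{2/p(t)−1} dt ≤ (1/√α) · C(1+a)/(1 + log⁺(1/a))^{1/2}. -/

import Mathlib

open Matrix
open scoped BigOperators Classical ComplexOrder

namespace QPaper

variable {ι : Type*} [Fintype ι] [DecidableEq ι]

/-- The positive semidefinite square root of a matrix (junk value `0` if the matrix is
not positive semidefinite). -/
noncomputable def psdSqrt (X : Matrix ι ι ℂ) : Matrix ι ι ℂ :=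
  if h : X.PosSemidef then
    h.1.eigenvectorUnitary.1 * diagonal (fun i => ((Real.sqrt (h.1.eigenvalues i) : ℝ) : ℂ)) *
      (star h.1.eigenvectorUnitary : Matrix ι ι ℂ)
  else 0

/-- The normalized trace (Schatten 1) norm `‖X‖₁ = tr |X| / card ι`. -/
noncomputable def normOne (X : Matrix ι ι ℂ) : ℝ :=
  (psdSqrt (Xᴴ * X)).trace.re / Fintype.card ι

/-- The normalized Schatten 2 norm `‖X‖₂ = (tr (X* X) / card ι)^{1/2}`. -/
noncomputable def normTwo (X : Matrix ι ι ℂ) : ℝ :=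
  Real.sqrt ((Xᴴ * X).trace.re / Fintype.card ι)

/-- The operator norm of a matrix, acting on the Euclidean space. -/
noncomputable def opNorm (X : Matrix ι ι ℂ) : ℝ :=
  ‖Matrix.toEuclideanCLM (𝕜 := ℂ) X‖

/-- The Loewner order: `X ≤ Y` iff `Y - X` is positive semidefinite. -/
def LoewnerLE (X Y : Matrix ι ι ℂ) : Prop := (Y - X).PosSemidef

/-- Configurations of `n` qubits. -/
abbrev QState (n : ℕ) := Fin n → Fin 2

/-- The algebra of `n`-qubit observables `M₂(ℂ)^{⊗ n}`. -/
abbrev Obs (n : ℕ) := Matrix (QState n) (QState n) ℂ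

/-- The conditional expectation `E_S = ⊗_{j ∈ S} (½ tr)(·) 𝟏 ⊗ id` replacing each qubit in `S`
by its normalized partial trace:  `E_S(A) = 2^{-|S|} tr_S(A) ⊗ 𝟏_S`. -/
noncomputable def ESet {n : ℕ} (S : Finset (Fin n)) (A : Obs n) : Obs n :=
  Matrix.of fun x y =>
    if ∀ j ∈ S, x j = y j then
      ((2 : ℂ) ^ n)⁻¹ *
        ∑ z : QState n,
          A (fun j => if j ∈ S then z j else x j) (fun j => if j ∈ S then z j else y j)
    else 0

/-- The derivation `d_j = 𝕀^{⊗(j-1)} ⊗ (𝕀 - ½ tr(·) 𝟏) ⊗ 𝕀^{⊗(n-j)}`. -/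
noncomputable def dCoord {n : ℕ} (j : Fin n) (A : Obs n) : Obs n := A - ESet {j} A

/-- The quantum depolarizing semigroup `P_t = (e^{-t} 𝕀 + (1 - e^{-t}) ½ tr(·) 𝟏)^{⊗ n}`. -/
noncomputable def Pt {n : ℕ} (t : ℝ) (A : Obs n) : Obs n :=
  ∑ S : Finset (Fin n),
    (Real.exp (-t) ^ (n - S.card) * (1 - Real.exp (-t)) ^ S.card) • ESet S A

/-- The generator `𝓛 = ∑_j d_j`. -/
noncomputable def Lgen {n : ℕ} (A : Obs n) : Obs n := ∑ j : Fin n, dCoord j A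

/-- The carré du champ `Γ(A) = ½ (𝓛(A*) A + A* 𝓛(A) - 𝓛(A* A))`. -/
noncomputable def carre {n : ℕ} (A : Obs n) : Obs n :=
  (2 : ℂ)⁻¹ • (Lgen Aᴴ * A + Aᴴ * Lgen A - Lgen (Aᴴ * A))

/-- The total `L¹`-influence `Inf¹(A) = ∑_j ‖d_j A‖₁`. -/
noncomputable def inf1 {n : ℕ} (A : Obs n) : ℝ := ∑ j : Fin n, normOne (dCoord j A)

/-- The total `L²`-influence `Inf²(A) = ∑_j ‖d_j A‖₂²`. -/
noncomputable def inf2 {n : ℕ} (A : Obs n) : ℝ := ∑ j : Fin n, normTwo (dCoord j A) ^ 2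

/-- The mean part `2^{-n} tr(A) 𝟏`. -/
noncomputable def meanPart {n : ℕ} (A : Obs n) : Obs n :=
  (A.trace / (2 : ℂ) ^ n) • (1 : Obs n)

/-- The variance `Var(A) = ‖A - 2^{-n} tr(A) 𝟏‖₂²`. -/
noncomputable def Var {n : ℕ} (A : Obs n) : ℝ := normTwo (A - meanPart A) ^ 2


open Real MeasureTheory Set


lemma one_sub_exp_half (u : ℝ) (h0 : 0 ≤ u) (h1 : u ≤ 1) : u / 2 ≤ 1 - Real.exp (-u) := by
  have h : Real.exp (-u) ≤ 1 / (1 + u) := by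
    rw [Real.exp_neg, one_div]
    exact inv_anti₀ (by linarith) (by linarith [Real.add_one_le_exp u])
  have h2 : 1 / (1 + u) ≤ 1 - u / 2 := by
    rw [div_le_iff₀ (by linarith)]
    nlinarith
  linarith

lemma int_half (r : ℝ) (hr : 0 ≤ r) :
    ∫ t in Ioc 0 r, t ^ ((1/2 : ℝ) - 1) = 2 * Real.sqrt r := by
  rw [← intervalIntegral.integral_of_le hr,
    integral_rpow (Or.inl (by norm_num)), Real.zero_rpow (by norm_num),
    Real.sqrt_eq_rpow]
  ring_nf

lemma gInt (b : ℝ) (hb : 0 < b) :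
    IntegrableOn (fun t : ℝ => t ^ ((1/2:ℝ) - 1) * Real.exp (-(b*t))) (Ioi 0) := by
  by_contra h
  have h2 := integral_rpow_mul_exp_neg_mul_Ioi (by norm_num : (0:ℝ) < 1/2) hb
  rw [MeasureTheory.integral_undef h] at h2
  have : 0 < (1/b) ^ (1/2:ℝ) * Real.Gamma (1/2) := by
    have := Real.Gamma_pos_of_pos (by norm_num : (0:ℝ) < 1/2)
    positivity
  linarith

lemma mono_helper {r : ℝ} (f g : ℝ → ℝ)
    (hfm : AEStronglyMeasurable f (volume.restrict (Ioc 0 r)))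
    (hg : IntegrableOn g (Ioc 0 r))
    (h0 : ∀ t ∈ Ioc (0:ℝ) r, 0 ≤ f t) (hle : ∀ t ∈ Ioc (0:ℝ) r, f t ≤ g t) :
    ∫ t in Ioc (0:ℝ) r, f t ≤ ∫ t in Ioc (0:ℝ) r, g t := by
  have hf : IntegrableOn f (Ioc 0 r) :=
    hg.mono' hfm ((ae_restrict_iff' measurableSet_Ioc).2 (ae_of_all _ fun t ht => by
      rw [Real.norm_eq_abs, abs_of_nonneg (h0 t ht)]; exact hle t ht))
  exact setIntegral_mono_on hf hg measurableSet_Ioc hle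

lemma sqrt_r_le {α r : ℝ} (hα : 0 < α) (hr0 : 0 ≤ r) (hr2 : r ≤ 1/(2*α)) :
    Real.sqrt r ≤ 1 / Real.sqrt α := by
  rw [le_div_iff₀ (Real.sqrt_pos.2 hα), ← Real.sqrt_mul hr0]
  apply Real.sqrt_le_one.2
  have := (le_div_iff₀ (show (0:ℝ) < 2*α by linarith)).1 hr2
  nlinarith

set_option maxHeartbeats 2000000 in
lemma core (α a r : ℝ) (hα : 0 < α) (ha : 0 ≤ a) (hr0 : 0 ≤ r) (hr1 : r ≤ 1)
    (hr2 : r ≤ 1/(2*α)) :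
    (∫ t in (0 : ℝ)..r,
        t ^ (-(1 - 1 / (1 + Real.exp (-(2 * α * t))))) *
          a ^ (2 / (1 + Real.exp (-(2 * α * t))) - 1)) ≤
      (1 / Real.sqrt α) *
        (4 * (1 + a) / Real.sqrt (1 + (Real.log (1 / a) ⊔ 0))) := by
  set f : ℝ → ℝ := fun t =>
    t ^ (-(1 - 1 / (1 + Real.exp (-(2 * α * t))))) *
      a ^ (2 / (1 + Real.exp (-(2 * α * t))) - 1) with hf_def
  rw [intervalIntegral.integral_of_le hr0]
  have hsα : 0 < Real.sqrt α := Real.sqrt_pos.2 hα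
  have h2α : (0:ℝ) < 2 * α := by linarith
  -- facts about p(t) for t ∈ Ioc 0 r
  have hp1 : ∀ t : ℝ, 1 < 1 + Real.exp (-(2 * α * t)) := fun t => by
    have := Real.exp_pos (-(2 * α * t)); linarith
  have hp2 : ∀ t ∈ Ioc (0:ℝ) r, 1 + Real.exp (-(2 * α * t)) ≤ 2 := fun t ht => by
    have : Real.exp (-(2 * α * t)) ≤ 1 :=
      Real.exp_le_one_iff.2 (by nlinarith [ht.1])
    linarith
  -- first-factor bound
  have hA : ∀ t ∈ Ioc (0:ℝ) r,
      t ^ (-(1 - 1 / (1 + Real.exp (-(2 * α * t))))) ≤ t ^ ((1/2:ℝ) - 1) := by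
    intro t ht
    apply Real.rpow_le_rpow_of_exponent_ge ht.1 (le_trans ht.2 hr1)
    have h1p : (1:ℝ)/2 ≤ 1 / (1 + Real.exp (-(2 * α * t))) :=
      one_div_le_one_div_of_le (by linarith [hp1 t]) (hp2 t ht)
    linarith
  -- exponent of a bounds
  have hkey : ∀ t ∈ Ioc (0:ℝ) r,
      α * t / 2 ≤ 2 / (1 + Real.exp (-(2 * α * t))) - 1 := by
    intro t ht
    have hu0 : 0 ≤ 2 * α * t := by nlinarith [ht.1.le]
    have hu1 : 2 * α * t ≤ 1 := by
      have := (le_div_iff₀ h2α).1 hr2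
      nlinarith [ht.2]
    have h1 := one_sub_exp_half (2*α*t) hu0 hu1
    have hp0 : (0:ℝ) < 1 + Real.exp (-(2 * α * t)) := by linarith [hp1 t]
    have heq : 2 / (1 + Real.exp (-(2 * α * t))) - 1
        = (1 - Real.exp (-(2*α*t))) / (1 + Real.exp (-(2 * α * t))) := by
      field_simp
      ring
    rw [heq]
    have h2 : (1 - Real.exp (-(2*α*t))) / 2
        ≤ (1 - Real.exp (-(2*α*t))) / (1 + Real.exp (-(2 * α * t))) :=
      div_le_div_of_nonneg_left (by linarith) hp0 (hp2 t ht)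
    linarith
  have hkeypos : ∀ t ∈ Ioc (0:ℝ) r, 0 < 2 / (1 + Real.exp (-(2 * α * t))) - 1 := by
    intro t ht
    have := hkey t ht
    nlinarith [ht.1]
  have hexp_le_one : ∀ t ∈ Ioc (0:ℝ) r, 2 / (1 + Real.exp (-(2 * α * t))) - 1 ≤ 1 := by
    intro t ht
    have hp0 : (0:ℝ) < 1 + Real.exp (-(2 * α * t)) := by linarith [hp1 t]
    rw [sub_le_iff_le_add, div_le_iff₀ hp0]
    linarith [hp1 t]
  have hfnn : ∀ t ∈ Ioc (0:ℝ) r, 0 ≤ f t := fun t ht =>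
    mul_nonneg (Real.rpow_nonneg ht.1.le _) (Real.rpow_nonneg ha _)
  have hIhalf : IntegrableOn (fun t : ℝ => t ^ ((1/2:ℝ) - 1)) (Ioc 0 r) :=
    (intervalIntegrable_iff_integrableOn_Ioc_of_le hr0).1
      (intervalIntegral.intervalIntegrable_rpow' (by norm_num))
  -- case a = 0
  rcases eq_or_lt_of_le ha with rfl | ha0
  · have hz : ∀ t ∈ Ioc (0:ℝ) r, f t = 0 := by
      intro t ht
      rw [hf_def]
      simp only
      rw [Real.zero_rpow (ne_of_gt (hkeypos t ht)), mul_zero]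
    rw [setIntegral_congr_fun measurableSet_Ioc hz, integral_zero]
    norm_num
  -- a > 0
  have hfm : AEStronglyMeasurable f (volume.restrict (Ioc 0 r)) := by
    have hden : Measurable fun t : ℝ => 1 + Real.exp (-(2 * α * t)) :=
      measurable_const.add (Real.measurable_exp.comp (measurable_id.const_mul (2*α)).neg)
    have hFm : Measurable (fun t : ℝ =>
        Real.exp (Real.log t * (-(1 - 1 / (1 + Real.exp (-(2 * α * t)))))) *
        Real.exp (Real.log a * (2 / (1 + Real.exp (-(2 * α * t))) - 1))) :=
      (Real.measurable_exp.comp (Real.measurable_log.mul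
          ((measurable_const.sub (measurable_const.div hden)).neg))).mul
        (Real.measurable_exp.comp (measurable_const.mul
          ((measurable_const.div hden).sub measurable_const)))
    apply hFm.aestronglyMeasurable.congr
    refine (ae_restrict_iff' measurableSet_Ioc).2 (ae_of_all _ fun t ht => ?_)
    rw [hf_def]
    simp only
    rw [Real.rpow_def_of_pos ht.1, Real.rpow_def_of_pos ha0]
  rcases le_or_gt 1 a with ha1 | ha1
  · -- a ≥ 1 : bound by t^{-1/2} * a
    have hL : Real.log (1/a) ⊔ 0 = 0 := by
      rw [sup_eq_right]
      exact Real.log_nonpos (by positivity) (by rw [div_le_one (by linarith)]; linarith)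
    have hle : ∀ t ∈ Ioc (0:ℝ) r, f t ≤ t ^ ((1/2:ℝ) - 1) * a := by
      intro t ht
      apply mul_le_mul (hA t ht) ?_ (Real.rpow_nonneg ha _) (Real.rpow_nonneg ht.1.le _)
      calc a ^ (2 / (1 + Real.exp (-(2 * α * t))) - 1) ≤ a ^ (1:ℝ) :=
            Real.rpow_le_rpow_of_exponent_le ha1 (hexp_le_one t ht)
        _ = a := Real.rpow_one a
    have step := mono_helper f _ hfm (hIhalf.mul_const a) hfnn hle
    have heval : ∫ t in Ioc (0:ℝ) r, t ^ ((1/2:ℝ) - 1) * a = 2 * Real.sqrt r * a := by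
      rw [integral_mul_const, int_half r hr0]
    have hsr := sqrt_r_le hα hr0 hr2
    calc (∫ t in Ioc (0:ℝ) r, f t) ≤ 2 * Real.sqrt r * a := by rw [← heval]; exact step
      _ ≤ (1 / Real.sqrt α) * (4 * (1 + a) / Real.sqrt (1 + (Real.log (1/a) ⊔ 0))) := by
          rw [hL, show (1:ℝ) + 0 = 1 by ring, Real.sqrt_one, div_one]
          have h2 : 0 ≤ 1 / Real.sqrt α := by positivity
          nlinarith [mul_le_mul_of_nonneg_right hsr ha, Real.sqrt_nonneg r]
  · -- 0 < a < 1
    set L : ℝ := Real.log (1/a) with hLdef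
    have hLpos : 0 < L := Real.log_pos (by rw [lt_div_iff₀ (by linarith)]; linarith)
    have hLsup : Real.log (1/a) ⊔ 0 = L := sup_eq_left.2 hLpos.le
    have hloga : Real.log a = -L := by
      rw [hLdef, one_div, Real.log_inv, neg_neg]
    set β : ℝ := α * L / 2 with hβdef
    have hβ : 0 < β := by positivity
    have hle : ∀ t ∈ Ioc (0:ℝ) r, f t ≤ t ^ ((1/2:ℝ) - 1) * Real.exp (-(β * t)) := by
      intro t ht
      apply mul_le_mul (hA t ht) ?_ (Real.rpow_nonneg ha _) (Real.rpow_nonneg ht.1.le _)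
      rw [Real.rpow_def_of_pos ha0]
      apply Real.exp_le_exp.2
      rw [hloga]
      have := hkey t ht
      have := ht.1
      nlinarith
    have hgIoi := gInt β hβ
    have hgIoc : IntegrableOn (fun t : ℝ => t ^ ((1/2:ℝ) - 1) * Real.exp (-(β*t)))
        (Ioc 0 r) := hgIoi.mono_set Ioc_subset_Ioi_self
    have step := mono_helper f _ hfm hgIoc hfnn hle
    have hgm : AEStronglyMeasurable (fun t : ℝ => t ^ ((1/2:ℝ) - 1) * Real.exp (-(β*t)))
        (volume.restrict (Ioc 0 r)) := hgIoc.aestronglyMeasurable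
    -- bound 1 : by 2 sqrt r
    have bound1 : (∫ t in Ioc (0:ℝ) r, t ^ ((1/2:ℝ) - 1) * Real.exp (-(β*t)))
        ≤ 2 * Real.sqrt r := by
      rw [← int_half r hr0]
      apply mono_helper _ _ hgm hIhalf
      · intro t ht
        have : (0:ℝ) < t := ht.1
        positivity
      · intro t ht
        have h1 : Real.exp (-(β*t)) ≤ 1 := Real.exp_le_one_iff.2 (by nlinarith [ht.1])
        have h2 : (0:ℝ) ≤ t ^ ((1/2:ℝ) - 1) := Real.rpow_nonneg ht.1.le _
        nlinarith
    -- bound 2 : Gamma integral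
    have bound2 : (∫ t in Ioc (0:ℝ) r, t ^ ((1/2:ℝ) - 1) * Real.exp (-(β*t)))
        ≤ (1/β) ^ (1/2:ℝ) * Real.Gamma (1/2) := by
      rw [← integral_rpow_mul_exp_neg_mul_Ioi (by norm_num : (0:ℝ) < 1/2) hβ]
      apply setIntegral_mono_set hgIoi
      · refine (ae_restrict_iff' measurableSet_Ioi).2 (ae_of_all _ fun t ht => ?_)
        have : (0:ℝ) < t := ht
        positivity
      · exact HasSubset.Subset.eventuallyLE Ioc_subset_Ioi_self
    rw [hLsup]
    rcases le_or_gt L 1 with hL1 | hL1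
    · -- use bound1
      refine le_trans (step.trans bound1) ?_
      have hsr := sqrt_r_le hα hr0 hr2
      have hs2 : Real.sqrt (1 + L) ≤ 2 := by
        rw [show (2:ℝ) = Real.sqrt 4 by
          rw [show (4:ℝ) = 2^2 by norm_num, Real.sqrt_sq (by norm_num)]]
        exact Real.sqrt_le_sqrt (by linarith)
      have hspos : 0 < Real.sqrt (1 + L) := Real.sqrt_pos.2 (by linarith)
      have h24 : (2:ℝ) ≤ 4 * (1 + a) / Real.sqrt (1 + L) := by
        rw [le_div_iff₀ hspos]
        nlinarith
      calc 2 * Real.sqrt r ≤ 2 * (1 / Real.sqrt α) := by linarith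
        _ ≤ (1 / Real.sqrt α) * (4 * (1 + a) / Real.sqrt (1 + L)) := by
            rw [mul_comm]
            exact mul_le_mul_of_nonneg_left h24 (by positivity)
    · -- use bound2
      refine le_trans (step.trans bound2) ?_
      rw [Real.Gamma_one_half_eq, ← Real.sqrt_eq_rpow]
      have hπ := Real.pi_le_four
      have hπ0 := Real.pi_pos
      have hspos : 0 < Real.sqrt (1 + L) := Real.sqrt_pos.2 (by linarith)
      have hfrac : (1/β) * Real.pi * α * (1 + L) ≤ 16 := by
        have hβne : β ≠ 0 := ne_of_gt hβ
        have heq : (1/β) * Real.pi * α * (1 + L) = 2 * Real.pi * (1 + L) / L := by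
          rw [hβdef]; field_simp
        rw [heq, div_le_iff₀ (by linarith)]
        nlinarith
      have hcomb : Real.sqrt (1/β) * Real.sqrt Real.pi * Real.sqrt α * Real.sqrt (1 + L)
          ≤ 4 := by
        rw [← Real.sqrt_mul (by positivity), ← Real.sqrt_mul (by positivity),
          ← Real.sqrt_mul (by positivity)]
        rw [show (4:ℝ) = Real.sqrt 16 by
          rw [show (16:ℝ) = 4^2 by norm_num, Real.sqrt_sq (by norm_num)]]
        exact Real.sqrt_le_sqrt hfrac
      have hstep : Real.sqrt (1/β) * Real.sqrt Real.pi
          ≤ (1 / Real.sqrt α) * (4 / Real.sqrt (1 + L)) := by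
        rw [show (1 / Real.sqrt α) * (4 / Real.sqrt (1 + L))
            = 4 / (Real.sqrt α * Real.sqrt (1 + L)) by field_simp]
        rw [le_div_iff₀ (by positivity)]
        calc Real.sqrt (1/β) * Real.sqrt Real.pi * (Real.sqrt α * Real.sqrt (1 + L))
            = Real.sqrt (1/β) * Real.sqrt Real.pi * Real.sqrt α * Real.sqrt (1 + L) := by ring
          _ ≤ 4 := hcomb
      refine hstep.trans ?_
      gcongr
      nlinarith

/-- There exists a universal `C > 0` such that for all `α > 0`, `a ≥ 0`,
`p(t) = 1 + e^{−2αt}` and `0 ≤ r ≤ min {1, 1/(2α)}`,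
`∫₀^r t^{−(1−1/p(t))} a^{2/p(t)−1} dt ≤ (1/√α) · C(1+a)/(1 + log⁺(1/a))^{1/2}`. -/
theorem integral_bound :
    ∃ C : ℝ, 0 < C ∧ ∀ α : ℝ, 0 < α → ∀ a : ℝ, 0 ≤ a → ∀ r : ℝ, 0 ≤ r →
      r ≤ min 1 (1 / (2 * α)) →
      (∫ t in (0 : ℝ)..r,
          t ^ (-(1 - 1 / (1 + Real.exp (-(2 * α * t))))) *
            a ^ (2 / (1 + Real.exp (-(2 * α * t))) - 1)) ≤
        (1 / Real.sqrt α) *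
          (C * (1 + a) / Real.sqrt (1 + (Real.log (1 / a) ⊔ 0))) := by
  refine ⟨4, by norm_num, fun α hα a ha r hr0 hrm => ?_⟩
  exact core α a r hα ha hr0 (hrm.trans (min_le_left _ _)) (hrm.trans (min_le_right _ _))

end QPaper
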